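/- Let G = (A ∪ P, E) be a bipartite graph, M a maximum matching in G, and let H be obtained from G by adding a new vertex a to the A-side together with edges from a to a set N ⊆ P of neighbors. If some vertex of N is even with respect to M in G, then the maximum matching size of H equals that of G plus one; otherwise (every vertex of N is odd or unreachable with respect to M in G) M itself is a maximum matching of H. -/

import Mathlib

open SimpleGraph

variable {V : Type*}

/-- `M` is a matching in the graph `G`: a set of edges of `G` no two of which
share a vertex. -/
def IsMatchingIn (G : SimpleGraph V) (M : Set (Sym2 V)) : Prop :=
  M ⊆ G.edgeSet ∧ ∀ e ∈ M, ∀ f ∈ M, e ≠ f → ∀ v : V, v ∈ e → v ∉ f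

/-- A vertex `v` is matched (covered) by the matching `M`. -/
def IsMatchedBy (M : Set (Sym2 V)) (v : V) : Prop :=
  ∃ e ∈ M, v ∈ e

/-- The list of edges of a path given as a list of vertices. -/
def pathEdges (p : List V) : List (Sym2 V) :=
  (p.zip p.tail).map fun q => s(q.1, q.2)

/-- `p` is an alternating path from `u` to `v` in `G` with respect to the matching `M`:
its consecutive vertices are adjacent in `G`, it repeats no vertex, and its edges
alternate between edges in `M` and edges not in `M`. -/
def IsAltPath (G : SimpleGraph V) (M : Set (Sym2 V)) (u v : V) (p : List V) : Prop :=
  p.Chain' G.Adj ∧ p.Nodup ∧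
    (pathEdges p).Chain' (fun e f => (e ∈ M ↔ f ∉ M)) ∧
    p.head? = some u ∧ p.getLast? = some v

/-- `v` is even with respect to `M`: there is an even-length alternating path from
an `M`-unmatched vertex to `v`. -/
def EvenVtx (G : SimpleGraph V) (M : Set (Sym2 V)) (v : V) : Prop :=
  ∃ u p, ¬ IsMatchedBy M u ∧ IsAltPath G M u v p ∧ Even (pathEdges p).length

/-- `v` is odd with respect to `M`: there is an odd-length alternating path from
an `M`-unmatched vertex to `v`. -/
def OddVtx (G : SimpleGraph V) (M : Set (Sym2 V)) (v : V) : Prop :=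
  ∃ u p, ¬ IsMatchedBy M u ∧ IsAltPath G M u v p ∧ Odd (pathEdges p).length

/-- `v` is unreachable with respect to `M`: there is no alternating path from any
`M`-unmatched vertex to `v`. -/
def UnreachableVtx (G : SimpleGraph V) (M : Set (Sym2 V)) (v : V) : Prop :=
  ¬ ∃ u p, ¬ IsMatchedBy M u ∧ IsAltPath G M u v p

/-- `M` is a maximum (cardinality) matching in `G`. -/
def IsMaxMatching (G : SimpleGraph V) (M : Set (Sym2 V)) : Prop :=
  IsMatchingIn G M ∧ ∀ N, IsMatchingIn G N → N.ncard ≤ M.ncard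

/-- `G` is bipartite with the two sides given by `side`. -/
def IsBipartiteWith (G : SimpleGraph V) (side : V → Bool) : Prop :=
  ∀ u v, G.Adj u v → side u ≠ side v

/-- The maximum matching size of `G`. -/
noncomputable def matchNum (G : SimpleGraph V) : ℕ :=
  sSup {n | ∃ M, IsMatchingIn G M ∧ n = M.ncard}

lemma chain'_iff_get_c {α : Type*} {R : α → α → Prop} {l : List α} :
    l.Chain' R ↔ ∀ (i : ℕ) (h : i < l.length - 1),
      R (l.get ⟨i, by omega⟩) (l.get ⟨i + 1, by omega⟩) := by
  unfold List.Chain'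
  rw [List.isChain_iff_getElem]
  constructor <;> intro h i hi <;> exact h i (by omega)

lemma chain'_cons_c {α : Type*} {R : α → α → Prop} {a b : α} {l : List α} :
    (a :: b :: l).Chain' R ↔ R a b ∧ (b :: l).Chain' R := by
  unfold List.Chain'
  exact List.isChain_cons_cons

lemma chain'_reverse_c {α : Type*} {R : α → α → Prop} {l : List α} :
    l.reverse.Chain' R ↔ l.Chain' (flip R) := by
  unfold List.Chain'
  exact List.isChain_reverse

section Basics
variable {V : Type*} {G : SimpleGraph V} {M : Set (Sym2 V)}

lemma pathEdges_length (p : List V) : (pathEdges p).length = p.length - 1 := by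
  simp [pathEdges, List.length_zip]

lemma pathEdges_get (p : List V) (i : ℕ) (h : i < (pathEdges p).length)
    (h1 : i < p.length) (h2 : i + 1 < p.length) :
    (pathEdges p).get ⟨i, h⟩ = s(p.get ⟨i, h1⟩, p.get ⟨i+1, h2⟩) := by
  simp only [pathEdges, List.get_eq_getElem, List.getElem_map, List.getElem_zip]
  rw [List.getElem_tail]

lemma matching_unique (hM : IsMatchingIn G M) {e f : Sym2 V} (he : e ∈ M) (hf : f ∈ M)
    {v : V} (hve : v ∈ e) (hvf : v ∈ f) : e = f := by
  by_contra hne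
  exact hM.2 e he f hf hne v hve hvf

lemma adj_of_edge (hG : s(x,y) ∈ G.edgeSet) : G.Adj x y := hG

/-- From the iff-chain alternation and first edge not in `M`, get the positional pattern. -/
lemma pattern_of_chain (E : List (Sym2 V))
    (hc : E.Chain' (fun e f => (e ∈ M ↔ f ∉ M)))
    (h0 : ∀ (h : 0 < E.length), E.get ⟨0, h⟩ ∉ M) :
    ∀ i (h : i < E.length), (E.get ⟨i, h⟩ ∈ M ↔ Odd i) := by
  intro i
  induction i with
  | zero => intro h; simpa using h0 h
  | succ i ih =>
    intro h
    have hi : i < E.length := by omega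
    have hcc : (E.get ⟨i, hi⟩ ∈ M ↔ E.get ⟨i+1, h⟩ ∉ M) :=
      (chain'_iff_get_c.mp hc) i (by omega)
    have hI := ih hi
    rw [Nat.odd_add_one]
    tauto

lemma chain_of_pattern (E : List (Sym2 V))
    (hpat : ∀ i (h : i < E.length), (E.get ⟨i, h⟩ ∈ M ↔ Odd i)) :
    E.Chain' (fun e f => (e ∈ M ↔ f ∉ M)) := by
  rw [chain'_iff_get_c]
  intro i h
  have h1 := hpat i (by omega)
  have h2 := hpat (i+1) (by omega)
  rw [h1, h2, Nat.odd_add_one]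
  tauto

end Basics
section Basics2
variable {V : Type*} {G : SimpleGraph V} {M : Set (Sym2 V)}

lemma head_eq_get (p : List V) (hne : p ≠ []) (h0 : 0 < p.length) :
    p.head hne = p.get ⟨0, h0⟩ := by
  cases p with
  | nil => exact absurd rfl hne
  | cons a l => rfl

lemma getLast_eq_get' (p : List V) (hne : p ≠ []) (h : p.length - 1 < p.length) :
    p.getLast hne = p.get ⟨p.length - 1, h⟩ := List.getLast_eq_getElem hne

lemma first_edge_not_mem (p : List V) (hne : p ≠ [])
    (hu : ¬ IsMatchedBy M (p.head hne)) (h : 0 < (pathEdges p).length) :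
    (pathEdges p).get ⟨0, h⟩ ∉ M := by
  have hl := pathEdges_length p
  have h1 : 0 < p.length := by omega
  have h2 : 1 < p.length := by omega
  rw [pathEdges_get p 0 h h1 h2]
  intro hmem
  exact hu ⟨_, hmem, by rw [head_eq_get p hne h1]; exact Sym2.mem_mk_left _ _⟩

lemma side_parity {side : V → Bool} (hbip : IsBipartiteWith G side)
    (p : List V) (hc : p.Chain' G.Adj) (h0 : 0 < p.length) :
    ∀ i (h : i < p.length),
      side (p.get ⟨i, h⟩) = xor (decide (Odd i)) (side (p.get ⟨0, h0⟩)) := by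
  intro i
  induction i with
  | zero => intro h; simp
  | succ i ih =>
    intro h
    have hi : i < p.length := by omega
    have hadj : G.Adj (p.get ⟨i, hi⟩) (p.get ⟨i+1, h⟩) :=
      (chain'_iff_get_c.mp hc) i (by omega)
    have hne := hbip _ _ hadj
    have hih := ih hi
    have hx : ∀ b c : Bool, b ≠ c → c = !b := by decide
    rw [hx _ _ hne, hih]
    rcases Nat.even_or_odd i with he | ho
    · have h1 : ¬ Odd i := by simp [Nat.not_odd_iff_even.mpr he]
      have h2 : Odd (i+1) := Even.add_one he
      simp [h1, h2]
    · have h2 : ¬ Odd (i+1) := by simp [Nat.not_odd_iff_even.mpr (Odd.add_one ho)]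
      simp [ho, h2]

end Basics2
section Flip
variable {V : Type*} [Fintype V] {G : SimpleGraph V}

lemma flip_lemma : ∀ (n : ℕ) (p : List V) (M : Set (Sym2 V)), p.length = n →
    IsMatchingIn G M → p.Nodup → p.Chain' G.Adj →
    (∀ i (h1 : i < p.length) (h2 : i+1 < p.length),
      (s(p.get ⟨i,h1⟩, p.get ⟨i+1,h2⟩) ∈ M ↔ Odd i)) →
    ∀ (hne : p ≠ []), ¬ IsMatchedBy M (p.head hne) →
    (Even p.length → ¬ IsMatchedBy M (p.getLast hne)) →
    ∃ M', IsMatchingIn G M' ∧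
      ((Odd p.length ∧ M'.ncard = M.ncard ∧ ¬ IsMatchedBy M' (p.getLast hne)) ∨
       (Even p.length ∧ M'.ncard = M.ncard + 1)) := by
  intro n
  induction n using Nat.strong_induction_on with
  | _ n IH =>
  intro p M hlen hM hnd hch hpat hne hhead hlast
  match p, hne with
  | [z], _ =>
    refine ⟨M, hM, Or.inl ⟨by simp, rfl, ?_⟩⟩
    simpa [List.getLast] using hhead
  | [z, v], _ =>
    have he0 : s(z, v) ∉ M := by
      have := hpat 0 (by simp) (by simp)
      simp at this; exact this
    have hzv : G.Adj z v := by
      rw [chain'_cons_c] at hch; exact hch.1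
    have hvun : ¬ IsMatchedBy M v := by
      have := hlast (by simp)
      simpa [List.getLast] using this
    have hzun : ¬ IsMatchedBy M z := by simpa using hhead
    refine ⟨insert s(z,v) M, ⟨?_, ?_⟩, Or.inr ⟨by simp, ?_⟩⟩
    · intro e he
      rcases he with rfl | he
      · exact hzv
      · exact hM.1 he
    · intro e he f hf hnef w hwe hwf
      rcases he with rfl | he <;> rcases hf with rfl | hf
      · exact hnef rfl
      · rcases Sym2.mem_iff.mp hwe with rfl | rfl
        · exact hzun ⟨f, hf, hwf⟩
        · exact hvun ⟨f, hf, hwf⟩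
      · rcases Sym2.mem_iff.mp hwf with rfl | rfl
        · exact hzun ⟨e, he, hwe⟩
        · exact hvun ⟨e, he, hwe⟩
      · exact hM.2 e he f hf hnef w hwe hwf
    · rw [Set.ncard_insert_of_notMem he0]
  | z :: v1 :: v2 :: rest, hne3 =>
    set p := z :: v1 :: v2 :: rest with hp
    set q := v2 :: rest with hq
    have hlp : p.length = rest.length + 3 := by simp [hp, hq]
    have hlq : q.length = rest.length + 1 := by simp [hq]
    have hget_inj : ∀ (i j : ℕ) (hi : i < p.length) (hj : j < p.length),
        p.get ⟨i, hi⟩ = p.get ⟨j, hj⟩ → i = j := by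
      intro i j hi hj hgg
      simpa using (List.Nodup.get_inj_iff hnd).mp hgg
    have hqget : ∀ (i : ℕ) (h : i < q.length), q.get ⟨i, h⟩ = p.get ⟨i+2, by omega⟩ := by
      intro i h; rfl
    have he0 : s(z, v1) ∉ M := by
      have := hpat 0 (by omega) (by omega)
      simp at this; exact this
    have he1 : s(v1, v2) ∈ M := by
      have := hpat 1 (by omega) (by omega)
      simp at this; exact this
    have hzun : ¬ IsMatchedBy M z := by simpa [hp] using hhead
    have hz0 : z = p.get ⟨0, by omega⟩ := rfl
    have hv1 : v1 = p.get ⟨1, by omega⟩ := rfl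
    have hv2 : v2 = p.get ⟨2, by omega⟩ := rfl
    set M2 : Set (Sym2 V) := insert s(z,v1) (M \ {s(v1,v2)}) with hM2def
    have hzv1 : G.Adj z v1 := by rw [chain'_cons_c] at hch; exact hch.1
    have hkey : ∀ f ∈ M \ {s(v1,v2)}, ∀ w, w ∈ s(z,v1) → w ∉ f := by
      intro f hf w hwe hwf
      rcases Sym2.mem_iff.mp hwe with rfl | rfl
      · exact hzun ⟨f, hf.1, hwf⟩
      · exact hf.2 (matching_unique hM hf.1 he1 hwf (Sym2.mem_mk_left _ _))
    have hM2 : IsMatchingIn G M2 := by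
      constructor
      · intro e he
        rcases he with rfl | he
        · exact hzv1
        · exact hM.1 he.1
      · intro e he f hf hnef w hwe hwf
        rcases he with rfl | he <;> rcases hf with rfl | hf
        · exact hnef rfl
        · exact hkey f hf w hwe hwf
        · exact hkey e he w hwf hwe
        · exact hM.2 e he.1 f hf.1 hnef w hwe hwf
    have hcard2 : M2.ncard = M.ncard := by
      rw [hM2def, Set.ncard_insert_of_notMem (fun hc => he0 hc.1)]
      rw [Set.ncard_diff_singleton_add_one he1]
    have hv2un : ¬ IsMatchedBy M2 v2 := by
      rintro ⟨g, hg, hvg⟩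
      rcases hg with rfl | hg
      · rcases Sym2.mem_iff.mp hvg with h | h
        · have := hget_inj 2 0 (by omega) (by omega) (by rw [← hv2, ← hz0, h]); omega
        · have := hget_inj 2 1 (by omega) (by omega) (by rw [← hv2, ← hv1, h]); omega
      · exact hg.2 (matching_unique hM hg.1 he1 hvg (Sym2.mem_mk_right _ _))
    have hqpat : ∀ i (h1 : i < q.length) (h2 : i+1 < q.length),
        (s(q.get ⟨i,h1⟩, q.get ⟨i+1,h2⟩) ∈ M2 ↔ Odd i) := by
      intro i h1 h2
      have hp1 : i + 2 < p.length := by omega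
      have hp2 : i + 3 < p.length := by omega
      set f := s(p.get ⟨i+2, hp1⟩, p.get ⟨i+3, hp2⟩) with hfdef
      have hfM : f ∈ M ↔ Odd (i+2) := hpat (i+2) hp1 hp2
      have hfne0 : f ≠ s(z,v1) := by
        intro hc
        have : z ∈ f := by rw [hc]; exact Sym2.mem_mk_left _ _
        rcases Sym2.mem_iff.mp this with h | h
        · have := hget_inj 0 (i+2) (by omega) hp1 (by rw [← hz0, h]); omega
        · have := hget_inj 0 (i+3) (by omega) hp2 (by rw [← hz0, h]); omega
      have hfne1 : f ≠ s(v1,v2) := by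
        intro hc
        have : v1 ∈ f := by rw [hc]; exact Sym2.mem_mk_left _ _
        rcases Sym2.mem_iff.mp this with h | h
        · have := hget_inj 1 (i+2) (by omega) hp1 (by rw [← hv1, h]); omega
        · have := hget_inj 1 (i+3) (by omega) hp2 (by rw [← hv1, h]); omega
      have hMM : f ∈ M2 ↔ f ∈ M := by
        constructor
        · rintro (hc | hc)
          · exact absurd hc hfne0
          · exact hc.1
        · intro hc; exact Or.inr ⟨hc, hfne1⟩
      show f ∈ M2 ↔ Odd i
      rw [hMM, hfM]
      constructor
      · rintro ⟨k, hk⟩; exact ⟨k-1, by omega⟩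
      · rintro ⟨k, hk⟩; exact ⟨k+1, by omega⟩
    have hqnd : q.Nodup := by
      simp only [hp, List.nodup_cons] at hnd
      exact hnd.2.2
    have hqch : q.Chain' G.Adj := (hch.tail).tail
    have hqne : q ≠ [] := by simp [hq]
    have hlast_eq : p.getLast hne3 = q.getLast hqne := by
      show (z :: v1 :: v2 :: rest).getLast hne3 = (v2 :: rest).getLast hqne
      rw [List.getLast_cons (by simp), List.getLast_cons (by simp)]
    have hlastq : Even q.length → ¬ IsMatchedBy M2 (q.getLast hqne) := by
      intro hev
      have hevp : Even p.length := by
        rcases hev with ⟨k, hk⟩; exact ⟨k+1, by omega⟩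
      have hlM : ¬ IsMatchedBy M (p.getLast hne3) := hlast hevp
      rw [← hlast_eq]
      rintro ⟨g, hg, hvg⟩
      rcases hg with rfl | hg
      · have hlg : p.getLast hne3 = p.get ⟨p.length - 1, by omega⟩ :=
          getLast_eq_get' p hne3 (by omega)
        rcases Sym2.mem_iff.mp hvg with h | h
        · have := hget_inj (p.length - 1) 0 (by omega) (by omega) (by rw [← hlg, ← hz0, h]); omega
        · have := hget_inj (p.length - 1) 1 (by omega) (by omega) (by rw [← hlg, ← hv1, h]); omega
      · exact hlM ⟨g, hg.1, hvg⟩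
    have hheadq : ¬ IsMatchedBy M2 (q.head hqne) := by simpa [hq] using hv2un
    obtain ⟨M', hM', hres⟩ := IH q.length (by omega) q M2 rfl hM2 hqnd hqch hqpat hqne hheadq hlastq
    refine ⟨M', hM', ?_⟩
    have hA : (z :: v1 :: v2 :: rest).length = rest.length + 3 := by simp
    have hB : (v2 :: rest).length = rest.length + 1 := by simp
    rcases hres with ⟨hodd, hcard, hunm⟩ | ⟨hev, hcard⟩
    · refine Or.inl ⟨?_, by rw [hcard, hcard2], by rw [hlast_eq]; exact hunm⟩
      rcases hodd with ⟨k, hk⟩; exact ⟨k+1, by omega⟩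
    · refine Or.inr ⟨?_, by rw [hcard, hcard2]⟩
      rcases hev with ⟨k, hk⟩; exact ⟨k+1, by omega⟩

end Flip
section Splice
variable {V : Type*}

lemma splice_length (p : List V) (i j : ℕ) (hij : i < j) (hj : j < p.length) :
    (p.take (i+1) ++ p.drop (j+1)).length = p.length - (j - i) := by
  simp only [List.length_append, List.length_take, List.length_drop]
  omega

lemma splice_get_le (p : List V) (i j : ℕ) (hij : i < j) (hj : j < p.length)
    (t : ℕ) (ht : t < (p.take (i+1) ++ p.drop (j+1)).length) (hti : t ≤ i)
    (htp : t < p.length) :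
    (p.take (i+1) ++ p.drop (j+1)).get ⟨t, ht⟩ = p.get ⟨t, htp⟩ := by
  have h1 : t < (p.take (i+1)).length := by
    simp only [List.length_take]; omega
  simp only [List.get_eq_getElem]
  rw [List.getElem_append_left h1, List.getElem_take]

lemma splice_get_gt (p : List V) (i j : ℕ) (hij : i < j) (hj : j < p.length)
    (t : ℕ) (ht : t < (p.take (i+1) ++ p.drop (j+1)).length) (hti : i < t)
    (htp : t + (j - i) < p.length) :
    (p.take (i+1) ++ p.drop (j+1)).get ⟨t, ht⟩ = p.get ⟨t + (j - i), htp⟩ := by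
  have hlen : (p.take (i+1)).length = i + 1 := by
    simp only [List.length_take]; omega
  have h1 : (p.take (i+1)).length ≤ t := by omega
  simp only [List.get_eq_getElem]
  rw [List.getElem_append_right h1, List.getElem_drop]
  congr 1
  simp only [hlen]
  omega

end Splice
section Walk
variable {V : Type*} [Fintype V] {G : SimpleGraph V} {side : V → Bool} {M : Set (Sym2 V)}

lemma get_idx_congr (p : List V) {i j : ℕ} (h : i = j) (hi : i < p.length) (hj : j < p.length) :
    p.get ⟨i, hi⟩ = p.get ⟨j, hj⟩ := by subst h; rfl

lemma no_odd_walk (hbip : IsBipartiteWith G side) (hM : IsMaxMatching G M) :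
    ∀ (n : ℕ) (p : List V), p.length = n → Even p.length → p.Chain' G.Adj →
    (∀ i (h1 : i < p.length) (h2 : i+1 < p.length),
      (s(p.get ⟨i,h1⟩, p.get ⟨i+1,h2⟩) ∈ M ↔ Odd i)) →
    ∀ (hne : p ≠ []), ¬ IsMatchedBy M (p.head hne) →
    ¬ IsMatchedBy M (p.getLast hne) → False := by
  intro n
  induction n using Nat.strong_induction_on with
  | _ n IH =>
  intro p hlen hev hch hpat hne hh hl
  by_cases hnd : p.Nodup
  · obtain ⟨M', hM', hres⟩ := flip_lemma p.length p M rfl hM.1 hnd hch hpat hne hh (fun _ => hl)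
    rcases hres with ⟨hodd, _, _⟩ | ⟨_, hcard⟩
    · exact (Nat.not_even_iff_odd.mpr hodd) hev
    · have := hM.2 M' hM'
      omega
  · -- find a duplicate
    have hninj : ¬ Function.Injective p.get := fun h => hnd (List.nodup_iff_injective_get.mpr h)
    obtain ⟨a, b, heq, hneq⟩ := Function.not_injective_iff.mp hninj
    -- wlog a < b
    obtain ⟨i, j, hij, hgg⟩ : ∃ (i j : ℕ) (hij : i < j), ∃ (hi : i < p.length) (hj : j < p.length),
        p.get ⟨i, hi⟩ = p.get ⟨j, hj⟩ := by
      rcases lt_trichotomy (a:ℕ) (b:ℕ) with h | h | h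
      · exact ⟨a, b, h, a.isLt, b.isLt, heq⟩
      · exact absurd (Fin.ext h) hneq
      · exact ⟨b, a, h, b.isLt, a.isLt, heq.symm⟩
    obtain ⟨hi, hj, hgg⟩ := hgg
    have hs0 : (0:ℕ) < p.length := by omega
    -- same parity or bipartite contradiction
    have hpar : (Odd i ↔ Odd j) := by
      by_contra hc
      have h1 := side_parity hbip p hch hs0 i hi
      have h2 := side_parity hbip p hch hs0 j hj
      rw [hgg, h2] at h1
      rcases Nat.even_or_odd i with hei | hoi
      · have hoj : Odd j := by
          rcases Nat.even_or_odd j with hej | hoj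
          · exact absurd (iff_of_false (Nat.not_odd_iff_even.mpr hei)
              (Nat.not_odd_iff_even.mpr hej)) hc
          · exact hoj
        rw [decide_eq_false (Nat.not_odd_iff_even.mpr hei), decide_eq_true hoj] at h1
        simp at h1
      · have hej : Even j := by
          rcases Nat.even_or_odd j with hej | hoj
          · exact hej
          · exact absurd (iff_of_true hoi hoj) hc
        rw [decide_eq_true hoi, decide_eq_false (Nat.not_odd_iff_even.mpr hej)] at h1
        simp at h1
    have hd2 : 2 ≤ j - i ∧ Even (j - i) := by
      constructor
      · rcases Nat.even_or_odd i with he | ho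
        · have : ¬ Odd i := by simp [Nat.not_odd_iff_even.mpr he]
          have : ¬ Odd j := fun hc => this (hpar.mpr hc)
          have hej : Even j := Nat.not_odd_iff_even.mp this
          rcases he with ⟨k,hk⟩; rcases hej with ⟨l,hl⟩; omega
        · have hoj : Odd j := hpar.mp ho
          rcases ho with ⟨k,hk⟩; rcases hoj with ⟨l,hl⟩; omega
      · rcases Nat.even_or_odd i with he | ho
        · have : ¬ Odd i := by simp [Nat.not_odd_iff_even.mpr he]
          have : ¬ Odd j := fun hc => this (hpar.mpr hc)
          have hej : Even j := Nat.not_odd_iff_even.mp this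
          rcases he with ⟨k,hk⟩; rcases hej with ⟨l,hl⟩; exact ⟨l-k, by omega⟩
        · have hoj : Odd j := hpar.mp ho
          rcases ho with ⟨k,hk⟩; rcases hoj with ⟨l,hl⟩; exact ⟨l-k, by omega⟩
    set p' := p.take (i+1) ++ p.drop (j+1) with hp'
    have hlen' : p'.length = p.length - (j - i) := splice_length p i j hij hj
    have hlpos : 0 < p'.length := by omega
    have hne' : p' ≠ [] := List.ne_nil_of_length_pos hlpos
    -- chain'
    have hch' : p'.Chain' G.Adj := by
      rw [chain'_iff_get_c]
      intro t ht
      have ht1 : t + 1 < p'.length := by omega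
      have htt : t < p'.length := by omega
      rcases lt_trichotomy t i with h | h | h
      · rw [splice_get_le p i j hij hj t htt (by omega) (by omega),
            splice_get_le p i j hij hj (t+1) ht1 (by omega) (by omega)]
        exact (chain'_iff_get_c.mp hch) t (by omega)
      · rw [splice_get_le p i j hij hj t htt (by omega) (by omega),
            splice_get_gt p i j hij hj (t+1) ht1 (by omega) (by omega)]
        rw [get_idx_congr p h (by omega) hi, hgg,
            get_idx_congr p (by omega : t+1+(j-i) = j+1) (by omega) (by omega)]
        exact (chain'_iff_get_c.mp hch) j (by omega)
      · rw [splice_get_gt p i j hij hj t htt (by omega) (by omega),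
            splice_get_gt p i j hij hj (t+1) ht1 (by omega) (by omega)]
        rw [get_idx_congr p (by omega : t+1+(j-i) = t+(j-i)+1) (by omega) (by omega)]
        exact (chain'_iff_get_c.mp hch) (t + (j-i)) (by omega)
    -- pattern
    have hpat' : ∀ t (h1 : t < p'.length) (h2 : t+1 < p'.length),
        (s(p'.get ⟨t,h1⟩, p'.get ⟨t+1,h2⟩) ∈ M ↔ Odd t) := by
      intro t h1 h2
      rcases lt_trichotomy t i with h | h | h
      · rw [splice_get_le p i j hij hj t h1 (by omega) (by omega),
            splice_get_le p i j hij hj (t+1) h2 (by omega) (by omega)]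
        exact hpat t (by omega) (by omega)
      · rw [splice_get_le p i j hij hj t h1 (by omega) (by omega),
            splice_get_gt p i j hij hj (t+1) h2 (by omega) (by omega)]
        rw [get_idx_congr p h (by omega) hi, hgg,
            get_idx_congr p (by omega : t+1+(j-i) = j+1) (by omega) (by omega)]
        rw [hpat j (by omega) (by omega)]
        rw [← h] at hpar
        exact hpar.symm
      · rw [splice_get_gt p i j hij hj t h1 (by omega) (by omega),
            splice_get_gt p i j hij hj (t+1) h2 (by omega) (by omega)]
        rw [get_idx_congr p (by omega : t+1+(j-i) = t+(j-i)+1) (by omega) (by omega)]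
        rw [hpat (t + (j-i)) (by omega) (by omega)]
        rcases hd2.2 with ⟨d, hd⟩
        constructor
        · rintro ⟨k, hk⟩; exact ⟨k - d, by omega⟩
        · rintro ⟨k, hk⟩; exact ⟨k + d, by omega⟩
    -- head and last
    have hh' : ¬ IsMatchedBy M (p'.head hne') := by
      rw [head_eq_get p' hne' hlpos,
          splice_get_le p i j hij hj 0 hlpos (by omega) (by omega)]
      rw [head_eq_get p hne hs0] at hh
      exact hh
    have hl' : ¬ IsMatchedBy M (p'.getLast hne') := by
      have hlene : (p.take (i+1) ++ p.drop (j+1)).length = p'.length := by rw [hp']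
      rw [getLast_eq_get' p' hne' (by omega)]
      rw [getLast_eq_get' p hne (by omega)] at hl
      rcases Nat.lt_or_ge (p'.length - 1) (i+1) with h | h
      · -- drop part empty: j = p.length - 1
        have hji : j = p.length - 1 := by omega
        rw [splice_get_le p i j hij hj (p'.length - 1) (by omega) (by omega) (by omega)]
        rw [get_idx_congr p (by omega : p'.length - 1 = i) (by omega) hi, hgg,
            get_idx_congr p (by omega : j = p.length - 1) hj (by omega)]
        exact hl
      · rw [splice_get_gt p i j hij hj (p'.length - 1) (by omega) (by omega) (by omega)]
        rw [get_idx_congr p (show p'.length - 1 + (j - i) = p.length - 1 by omega)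
          (by omega) (by omega)]
        exact hl
    have hev' : Even p'.length := by
      rcases hev with ⟨k, hk⟩; rcases hd2.2 with ⟨d, hd⟩
      exact ⟨k - d, by omega⟩
    exact IH p'.length (by omega) p' rfl hev' hch' hpat' hne' hh' hl'

end Walk
section BuildC
variable {V : Type*} [Fintype V] {G : SimpleGraph V} {M K : Set (Sym2 V)}

lemma nodup_get_inj (p : List V) (hnd : p.Nodup) {i j : ℕ} (hi : i < p.length)
    (hj : j < p.length) (h : p.get ⟨i, hi⟩ = p.get ⟨j, hj⟩) : i = j := by
  simpa using (List.Nodup.get_inj_iff hnd).mp h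

lemma even_of_unmatched_aux (hM : IsMaxMatching G M) (hK : IsMatchingIn G K)
    (hcard : M.ncard ≤ K.ncard) (q : V) (hq : ¬ IsMatchedBy K q) :
    ∀ (fuel : ℕ) (p : List V), Fintype.card V < p.length + fuel → p ≠ [] → p.Nodup →
    (∀ (h0 : 0 < p.length), p.get ⟨0, h0⟩ = q) →
    (∀ i (h1 : i < p.length) (h2 : i+1 < p.length),
      (s(p.get ⟨i,h1⟩, p.get ⟨i+1,h2⟩) ∈ M ↔ Even i) ∧
      (s(p.get ⟨i,h1⟩, p.get ⟨i+1,h2⟩) ∈ K ↔ Odd i)) →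
    EvenVtx G M q := by
  intro fuel
  induction fuel with
  | zero =>
    intro p hfuel hne hnd _ _
    exact absurd (List.Nodup.length_le_card hnd) (by omega)
  | succ fuel IH =>
    intro p hfuel hne hnd hhead hpat
    have hlpos : 0 < p.length := List.length_pos_iff.mpr hne
    set m := p.length - 1 with hm
    have hmlt : m < p.length := by omega
    set w := p.get ⟨m, hmlt⟩ with hw
    have hchain : p.Chain' G.Adj := by
      rw [chain'_iff_get_c]
      intro t ht
      have h1 : t < p.length := by omega
      have h2 : t + 1 < p.length := by omega
      have hpt := hpat t h1 h2
      rcases Nat.even_or_odd t with he | ho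
      · exact (SimpleGraph.mem_edgeSet G).mp (hM.1.1 (hpt.1.mpr he))
      · exact (SimpleGraph.mem_edgeSet G).mp (hK.1 (hpt.2.mpr ho))
    rcases Nat.even_or_odd m with hmEven | hmOdd
    · by_cases hwM : IsMatchedBy M w
      · -- extend with the M-edge at w
        obtain ⟨g, hgM, hwg⟩ := hwM
        set y := Sym2.Mem.other hwg with hy
        have hgy : s(w, y) = g := Sym2.other_spec hwg
        have hyg : y ∈ g := by rw [← hgy]; exact Sym2.mem_mk_right _ _
        have hwy : w ≠ y := by
          have : G.Adj w y := (SimpleGraph.mem_edgeSet G).mp (hM.1.1 (hgy ▸ hgM))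
          exact this.ne
        have hgK : g ∉ K := by
          intro hgK
          rcases Nat.eq_zero_or_pos m with h0 | hpos
          · refine hq ⟨g, hgK, ?_⟩
            rw [← hhead hlpos, get_idx_congr p h0.symm hlpos hmlt]
            exact hwg
          · have hm1 : m - 1 < p.length := by omega
            have hm2 : m - 1 + 1 < p.length := by omega
            have hprev := hpat (m-1) hm1 hm2
            have hoddm1 : Odd (m-1) := by
              rcases hmEven with ⟨k, hk⟩; exact ⟨k-1, by omega⟩
            have hprevK : s(p.get ⟨m-1,hm1⟩, p.get ⟨m-1+1,hm2⟩) ∈ K := hprev.2.mpr hoddm1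
            have hprevnM : s(p.get ⟨m-1,hm1⟩, p.get ⟨m-1+1,hm2⟩) ∉ M := fun hc => by
              have := hprev.1.mp hc
              rcases this with ⟨k,hk⟩; rcases hoddm1 with ⟨l,hl⟩; omega
            have hgne : g ≠ s(p.get ⟨m-1,hm1⟩, p.get ⟨m-1+1,hm2⟩) := fun hc => hprevnM (hc ▸ hgM)
            refine hK.2 g hgK _ hprevK hgne w hwg ?_
            rw [hw, get_idx_congr p (by omega : m = m - 1 + 1) hmlt hm2]
            exact Sym2.mem_mk_right _ _
        have hyfresh : ∀ (s : ℕ) (hs : s < p.length), p.get ⟨s, hs⟩ ≠ y := by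
          intro s hs hc
          rcases Nat.lt_or_ge s m with hsm | hsm
          · -- find M-edge of p_s on the path
            rcases Nat.even_or_odd s with hse | hso
            · have h2 : s + 1 < p.length := by omega
              have hf := (hpat s hs h2).1.mpr hse
              have hyf : y ∈ s(p.get ⟨s,hs⟩, p.get ⟨s+1,h2⟩) := by
                rw [hc] at *; exact Sym2.mem_mk_left _ _
              have hfg : g = s(p.get ⟨s,hs⟩, p.get ⟨s+1,h2⟩) :=
                matching_unique hM.1 hgM hf hyg hyf
              have hwf : w ∈ s(p.get ⟨s,hs⟩, p.get ⟨s+1,h2⟩) := hfg ▸ hwg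
              rcases Sym2.mem_iff.mp hwf with h | h
              · have := nodup_get_inj p hnd hmlt hs h; omega
              · have := nodup_get_inj p hnd hmlt h2 h
                -- m = s+1 : contradicts parity (m even, s even)
                rcases hmEven with ⟨k,hk⟩; rcases hse with ⟨l,hl⟩; omega
            · have hspos : 0 < s := by rcases hso with ⟨k,hk⟩; omega
              have hs1 : s - 1 < p.length := by omega
              have hs2 : s - 1 + 1 < p.length := by omega
              have hesE : Even (s-1) := by rcases hso with ⟨k,hk⟩; exact ⟨k, by omega⟩
              have hf := (hpat (s-1) hs1 hs2).1.mpr hesE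
              have hyf : y ∈ s(p.get ⟨s-1,hs1⟩, p.get ⟨s-1+1,hs2⟩) := by
                rw [← hc, get_idx_congr p (by omega : s = s - 1 + 1) hs hs2]
                exact Sym2.mem_mk_right _ _
              have hfg : g = s(p.get ⟨s-1,hs1⟩, p.get ⟨s-1+1,hs2⟩) :=
                matching_unique hM.1 hgM hf hyg hyf
              have hwf : w ∈ s(p.get ⟨s-1,hs1⟩, p.get ⟨s-1+1,hs2⟩) := hfg ▸ hwg
              rcases Sym2.mem_iff.mp hwf with h | h
              · have := nodup_get_inj p hnd hmlt hs1 h; omega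
              · have := nodup_get_inj p hnd hmlt hs2 h; omega
          · -- s = m : y = w
            have hsm' : s = m := by omega
            apply hwy
            rw [hw, ← get_idx_congr p hsm' hs hmlt]
            exact hc
        set p' := p ++ [y] with hp'
        have hlen' : p'.length = p.length + 1 := by simp [hp']
        have hgetl : ∀ (i : ℕ) (hi : i < p.length) (h : i < p'.length),
            p'.get ⟨i, h⟩ = p.get ⟨i, hi⟩ := by
          intro i hi h
          simp only [hp', List.get_eq_getElem]
          rw [List.getElem_append_left hi]
        have hgetr : ∀ (h : p.length < p'.length), p'.get ⟨p.length, h⟩ = y := by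
          intro h
          simp [hp']
        refine IH p' (by omega) (by simp [hp']) ?_ ?_ ?_
        · rw [hp', List.nodup_append]
          refine ⟨hnd, List.nodup_singleton y, ?_⟩
          intro a ha b hay
          rw [List.mem_singleton] at hay
          rw [hay]; intro hay
          obtain ⟨⟨s, hs⟩, rfl⟩ := List.mem_iff_get.mp ha
          exact hyfresh s hs hay
        · intro h0
          rw [hgetl 0 hlpos h0]
          exact hhead hlpos
        · intro i h1 h2
          rcases Nat.lt_or_ge (i+1) p.length with hlt | hge
          · rw [hgetl i (by omega) h1, hgetl (i+1) hlt h2]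
            exact hpat i (by omega) hlt
          · have him : i = m := by omega
            have hieq : i + 1 = p.length := by omega
            rw [hgetl i (by omega) h1,
                get_idx_congr p' hieq (by omega) (by omega), hgetr (by omega),
                get_idx_congr p him (by omega) hmlt]
            rw [← hw, hgy]
            constructor
            · exact iff_of_true hgM (him ▸ hmEven)
            · refine iff_of_false hgK ?_
              rw [him]
              rcases hmEven with ⟨k,hk⟩
              rintro ⟨l, hl⟩; omega
      · -- terminal: w unmatched by M, produce the even alternating path
        refine ⟨w, p.reverse, hwM, ⟨?_, ?_, ?_, ?_, ?_⟩, ?_⟩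
        · rw [chain'_reverse_c]
          exact List.IsChain.imp (fun a b hab => hab.symm) hchain
        · exact List.nodup_reverse.mpr hnd
        · apply chain_of_pattern
          intro i hi
          have hlE : (pathEdges p.reverse).length = m := by
            rw [pathEdges_length, List.length_reverse]
          have him : i < m := by omega
          have hr1 : i < p.reverse.length := by rw [List.length_reverse]; omega
          have hr2 : i + 1 < p.reverse.length := by rw [List.length_reverse]; omega
          rw [pathEdges_get p.reverse i hi hr1 hr2]
          have hrg1 : p.reverse.get ⟨i, hr1⟩ = p.get ⟨m - i, by omega⟩ := by
            simp only [List.get_eq_getElem, List.getElem_reverse]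
            try exact get_idx_congr p (by omega) (by omega) (by omega)
          have hrg2 : p.reverse.get ⟨i+1, hr2⟩ = p.get ⟨m - i - 1, by omega⟩ := by
            simp only [List.get_eq_getElem, List.getElem_reverse]
            try exact get_idx_congr p (by omega) (by omega) (by omega)
          rw [hrg1, hrg2, Sym2.eq_swap]
          have := (hpat (m-i-1) (by omega) (by omega)).1
          rw [get_idx_congr p (by omega : m - i = m - i - 1 + 1) (by omega) (by omega), this]
          rcases hmEven with ⟨k, hk⟩
          constructor
          · rintro ⟨l, hl⟩; exact ⟨k - l - 1, by omega⟩
          · rintro ⟨l, hl⟩; exact ⟨k - l - 1, by omega⟩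
        · rw [List.head?_reverse, List.getLast?_eq_getLast hne]
          congr 1
          rw [getLast_eq_get' p hne (by omega)]
        · rw [List.getLast?_reverse, List.head?_eq_head hne]
          congr 1
          rw [head_eq_get p hne hlpos]
          exact hhead hlpos
        · rw [pathEdges_length, List.length_reverse]
          exact hmEven
    · -- m odd
      by_cases hwK : IsMatchedBy K w
      · obtain ⟨g, hgK, hwg⟩ := hwK
        set y := Sym2.Mem.other hwg with hy
        have hgy : s(w, y) = g := Sym2.other_spec hwg
        have hyg : y ∈ g := by rw [← hgy]; exact Sym2.mem_mk_right _ _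
        have hwy : w ≠ y := by
          have : G.Adj w y := (SimpleGraph.mem_edgeSet G).mp (hK.1 (hgy ▸ hgK))
          exact this.ne
        have hmpos : 0 < m := by rcases hmOdd with ⟨k,hk⟩; omega
        have hgM : g ∉ M := by
          intro hgM
          have hm1 : m - 1 < p.length := by omega
          have hm2 : m - 1 + 1 < p.length := by omega
          have hprev := hpat (m-1) hm1 hm2
          have hevm1 : Even (m-1) := by rcases hmOdd with ⟨k, hk⟩; exact ⟨k, by omega⟩
          have hprevM : s(p.get ⟨m-1,hm1⟩, p.get ⟨m-1+1,hm2⟩) ∈ M := hprev.1.mpr hevm1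
          have hprevnK : s(p.get ⟨m-1,hm1⟩, p.get ⟨m-1+1,hm2⟩) ∉ K := fun hc => by
            have := hprev.2.mp hc
            rcases this with ⟨k,hk⟩; rcases hevm1 with ⟨l,hl⟩; omega
          have hgne : g ≠ s(p.get ⟨m-1,hm1⟩, p.get ⟨m-1+1,hm2⟩) := fun hc => hprevnK (hc ▸ hgK)
          refine hM.1.2 g hgM _ hprevM hgne w hwg ?_
          rw [hw, get_idx_congr p (by omega : m = m - 1 + 1) hmlt hm2]
          exact Sym2.mem_mk_right _ _
        have hyfresh : ∀ (s : ℕ) (hs : s < p.length), p.get ⟨s, hs⟩ ≠ y := by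
          intro s hs hc
          rcases Nat.lt_or_ge s m with hsm | hsm
          · rcases Nat.eq_zero_or_pos s with rfl | hspos
            · refine hq ⟨g, hgK, ?_⟩
              have hcc : p.get ⟨0, hlpos⟩ = y := hc
              rw [← hhead hlpos, hcc]
              exact hyg
            · rcases Nat.even_or_odd s with hse | hso
              · have hs1 : s - 1 < p.length := by omega
                have hs2 : s - 1 + 1 < p.length := by omega
                have hosE : Odd (s-1) := by rcases hse with ⟨k,hk⟩; exact ⟨k-1, by omega⟩
                have hf := (hpat (s-1) hs1 hs2).2.mpr hosE
                have hyf : y ∈ s(p.get ⟨s-1,hs1⟩, p.get ⟨s-1+1,hs2⟩) := by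
                  rw [← hc, get_idx_congr p (by omega : s = s - 1 + 1) hs hs2]
                  exact Sym2.mem_mk_right _ _
                have hfg : g = s(p.get ⟨s-1,hs1⟩, p.get ⟨s-1+1,hs2⟩) :=
                  matching_unique hK hgK hf hyg hyf
                have hwf : w ∈ s(p.get ⟨s-1,hs1⟩, p.get ⟨s-1+1,hs2⟩) := hfg ▸ hwg
                rcases Sym2.mem_iff.mp hwf with h | h
                · have := nodup_get_inj p hnd hmlt hs1 h; omega
                · have := nodup_get_inj p hnd hmlt hs2 h; omega
              · have h2 : s + 1 < p.length := by omega
                have hf := (hpat s hs h2).2.mpr hso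
                have hyf : y ∈ s(p.get ⟨s,hs⟩, p.get ⟨s+1,h2⟩) := by
                  rw [hc] at *; exact Sym2.mem_mk_left _ _
                have hfg : g = s(p.get ⟨s,hs⟩, p.get ⟨s+1,h2⟩) :=
                  matching_unique hK hgK hf hyg hyf
                have hwf : w ∈ s(p.get ⟨s,hs⟩, p.get ⟨s+1,h2⟩) := hfg ▸ hwg
                rcases Sym2.mem_iff.mp hwf with h | h
                · have := nodup_get_inj p hnd hmlt hs h; omega
                · have := nodup_get_inj p hnd hmlt h2 h
                  rcases hmOdd with ⟨k,hk⟩; rcases hso with ⟨l,hl⟩; omega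
          · have hsm' : s = m := by omega
            apply hwy
            rw [hw, ← get_idx_congr p hsm' hs hmlt]
            exact hc
        set p' := p ++ [y] with hp'
        have hlen' : p'.length = p.length + 1 := by simp [hp']
        have hgetl : ∀ (i : ℕ) (hi : i < p.length) (h : i < p'.length),
            p'.get ⟨i, h⟩ = p.get ⟨i, hi⟩ := by
          intro i hi h
          simp only [hp', List.get_eq_getElem]
          rw [List.getElem_append_left hi]
        have hgetr : ∀ (h : p.length < p'.length), p'.get ⟨p.length, h⟩ = y := by
          intro h
          simp [hp']
        refine IH p' (by omega) (by simp [hp']) ?_ ?_ ?_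
        · rw [hp', List.nodup_append]
          refine ⟨hnd, List.nodup_singleton y, ?_⟩
          intro a ha b hay
          rw [List.mem_singleton] at hay
          rw [hay]; intro hay
          obtain ⟨⟨s, hs⟩, rfl⟩ := List.mem_iff_get.mp ha
          exact hyfresh s hs hay
        · intro h0
          rw [hgetl 0 hlpos h0]
          exact hhead hlpos
        · intro i h1 h2
          rcases Nat.lt_or_ge (i+1) p.length with hlt | hge
          · rw [hgetl i (by omega) h1, hgetl (i+1) hlt h2]
            exact hpat i (by omega) hlt
          · have him : i = m := by omega
            have hieq : i + 1 = p.length := by omega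
            rw [hgetl i (by omega) h1,
                get_idx_congr p' hieq (by omega) (by omega), hgetr (by omega),
                get_idx_congr p him (by omega) hmlt]
            rw [← hw, hgy]
            constructor
            · refine iff_of_false hgM ?_
              rw [him]
              rcases hmOdd with ⟨k,hk⟩
              rintro ⟨l, hl⟩; omega
            · exact iff_of_true hgK (him ▸ hmOdd)
      · -- terminal: augmenting path for K; contradiction with maximality of M
        exfalso
        have hqhead : ¬ IsMatchedBy K (p.head hne) := by
          rw [head_eq_get p hne hlpos, hhead hlpos]; exact hq
        have hlastK : Even p.length → ¬ IsMatchedBy K (p.getLast hne) := by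
          intro _
          rw [getLast_eq_get' p hne (by omega)]
          exact hwK
        obtain ⟨K', hK', hres⟩ := flip_lemma p.length p K rfl hK hnd hchain
          (fun i h1 h2 => (hpat i h1 h2).2) hne hqhead hlastK
        rcases hres with ⟨hodd, _, _⟩ | ⟨_, hcard'⟩
        · rcases hodd with ⟨k, hk⟩; rcases hmOdd with ⟨l, hl⟩; omega
        · have := hM.2 K' hK'
          omega

lemma even_of_unmatched (hM : IsMaxMatching G M) (hK : IsMatchingIn G K)
    (hcard : M.ncard ≤ K.ncard) (q : V) (hq : ¬ IsMatchedBy K q) : EvenVtx G M q := by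
  refine even_of_unmatched_aux hM hK hcard q hq (Fintype.card V + 1) [q] (by simp; omega) (by simp)
    (by simp) (fun _ => rfl) ?_

  intro i h1 h2
  simp at h2

end BuildC
section EvenOdd
variable {V : Type*} [Fintype V] {G : SimpleGraph V} {side : V → Bool} {M : Set (Sym2 V)}

/-- Positional pattern of an alternating path from an unmatched vertex. -/
lemma alt_pattern {u v : V} {p : List V} (hun : ¬ IsMatchedBy M u)
    (hp : IsAltPath G M u v p) :
    ∀ i (h1 : i < p.length) (h2 : i+1 < p.length),
      (s(p.get ⟨i,h1⟩, p.get ⟨i+1,h2⟩) ∈ M ↔ Odd i) := by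
  obtain ⟨hch, hnd, halt, hhead, hlast⟩ := hp
  have hne : p ≠ [] := by rintro rfl; simp at hhead
  have hhd : p.head hne = u := by
    have := List.head?_eq_head hne (l := p)
    rw [this] at hhead
    exact Option.some.inj hhead
  have h0 : ∀ (h : 0 < (pathEdges p).length), (pathEdges p).get ⟨0, h⟩ ∉ M := by
    intro h
    apply first_edge_not_mem p hne
    rw [hhd]; exact hun
  have hpatE := pattern_of_chain (pathEdges p) halt h0
  intro i h1 h2
  have hE : i < (pathEdges p).length := by rw [pathEdges_length]; omega
  have := hpatE i hE
  rw [pathEdges_get p i hE h1 h2] at this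
  exact this

lemma not_even_and_odd (hbip : IsBipartiteWith G side) (hM : IsMaxMatching G M)
    (q : V) (he : EvenVtx G M q) (ho : OddVtx G M q) : False := by
  obtain ⟨u, P, hu, hPalt, hPeven⟩ := he
  obtain ⟨w, Q, hw, hQalt, hQodd⟩ := ho
  have hPne : P ≠ [] := by rintro rfl; simp [IsAltPath] at hPalt
  have hQne : Q ≠ [] := by rintro rfl; simp [IsAltPath] at hQalt
  have hPpat := alt_pattern hu hPalt
  have hQpat := alt_pattern hw hQalt
  have hPlen := pathEdges_length P
  have hQlen := pathEdges_length Q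
  have hQl0 : 0 < Q.length := List.length_pos_iff.mpr hQne
  have hPl0 : 0 < P.length := List.length_pos_iff.mpr hPne
  -- endpoints as gets
  have hP0 : P.get ⟨0, hPl0⟩ = u := by
    have h := hPalt.2.2.2.1
    rw [List.head?_eq_head hPne] at h
    rw [← head_eq_get P hPne hPl0]
    exact Option.some.inj h
  have hPlast : P.get ⟨P.length - 1, by omega⟩ = q := by
    have h := hPalt.2.2.2.2
    rw [List.getLast?_eq_getLast hPne] at h
    rw [← getLast_eq_get' P hPne (by omega)]
    exact Option.some.inj h
  have hQ0 : Q.get ⟨0, hQl0⟩ = w := by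
    have h := hQalt.2.2.2.1
    rw [List.head?_eq_head hQne] at h
    rw [← head_eq_get Q hQne hQl0]
    exact Option.some.inj h
  have hQlast : Q.get ⟨Q.length - 1, by omega⟩ = q := by
    have h := hQalt.2.2.2.2
    rw [List.getLast?_eq_getLast hQne] at h
    rw [← getLast_eq_get' Q hQne (by omega)]
    exact Option.some.inj h
  have hQev : Even Q.length := by
    rcases hQodd with ⟨k, hk⟩; exact ⟨k+1, by omega⟩
  have hPodd : Odd P.length := by
    rcases hPeven with ⟨k, hk⟩; exact ⟨k, by omega⟩
  rcases Nat.lt_or_ge P.length 2 with hP1 | hP2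
  · -- P = [q] : q is unmatched; Q itself is the augmenting walk
    have hPq : P.length = 1 := by omega
    have huq : u = q := by
      rw [← hP0, get_idx_congr P (by omega : 0 = P.length - 1) hPl0 (by omega), hPlast]
    refine no_odd_walk hbip hM Q.length Q rfl hQev hQalt.1 ?_ hQne ?_ ?_
    · intro i h1 h2; exact hQpat i h1 h2
    · rw [head_eq_get Q hQne hQl0, hQ0]; exact hw
    · rw [getLast_eq_get' Q hQne (by omega), hQlast, ← huq]; exact hu
  · -- general case : W = Q ++ (P.reverse.tail)
    set R := P.reverse.tail with hR
    have hRlen : R.length = P.length - 1 := by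
      rw [hR, List.length_tail, List.length_reverse]
    have hRget : ∀ (t : ℕ) (ht : t < R.length),
        R.get ⟨t, ht⟩ = P.get ⟨P.length - 2 - t, by omega⟩ := by
      intro t ht
      show P.reverse.tail.get ⟨t, ht⟩ = _
      simp only [List.get_eq_getElem, List.getElem_tail, List.getElem_reverse]
      exact get_idx_congr P (by omega) (by omega) (by omega)
    set W := Q ++ R with hW
    have hWlen : W.length = Q.length + P.length - 1 := by
      rw [hW, List.length_append, hRlen]; omega
    have hWne : W ≠ [] := by
      apply List.ne_nil_of_length_pos; omega
    have hWgetl : ∀ (t : ℕ) (ht : t < Q.length) (h : t < W.length),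
        W.get ⟨t, h⟩ = Q.get ⟨t, ht⟩ := by
      intro t ht h
      simp only [hW, List.get_eq_getElem]
      rw [List.getElem_append_left ht]
    have hWgetr : ∀ (t : ℕ) (ht : Q.length ≤ t) (h : t < W.length),
        W.get ⟨t, h⟩ = P.get ⟨P.length - 2 - (t - Q.length), by omega⟩ := by
      intro t ht h
      simp only [hW, List.get_eq_getElem]
      rw [List.getElem_append_right ht]
      have := hRget (t - Q.length) (by rw [hRlen]; omega)
      simpa using this
    -- the W edges
    have hWedge : ∀ (t : ℕ) (h1 : t < W.length) (h2 : t + 1 < W.length),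
        (s(W.get ⟨t, h1⟩, W.get ⟨t+1, h2⟩) ∈ M ↔ Odd t) ∧
        G.Adj (W.get ⟨t, h1⟩) (W.get ⟨t+1, h2⟩) := by
      intro t h1 h2
      rcases Nat.lt_or_ge (t+1) Q.length with hlt | hge
      · rw [hWgetl t (by omega) h1, hWgetl (t+1) hlt h2]
        exact ⟨hQpat t (by omega) hlt, (chain'_iff_get_c.mp hQalt.1) t (by omega)⟩
      · rcases Nat.lt_or_ge t Q.length with hteq | htgt
        · -- junction edge : t = Q.length - 1
          have htq : t = Q.length - 1 := by omega
          rw [hWgetl t (by omega) h1, hWgetr (t+1) (by omega) h2]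
          rw [get_idx_congr Q (by omega : t = Q.length - 1) (by omega) (by omega), hQlast]
          rw [get_idx_congr P (by omega : P.length - 2 - (t + 1 - Q.length) = P.length - 2)
            (by omega) (by omega)]
          have hPe := hPpat (P.length - 2) (by omega) (by omega)
          rw [get_idx_congr P (by omega : P.length - 2 + 1 = P.length - 1) (by omega) (by omega),
            hPlast] at hPe
          rw [Sym2.eq_swap]
          rw [hPe]
          have hO1 : Odd (P.length - 2) := by rcases hPodd with ⟨k, hk⟩; exact ⟨k-1, by omega⟩
          have hO2 : Odd t := by
            rcases hQev with ⟨k, hk⟩; exact ⟨k-1, by omega⟩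
          constructor
          · exact iff_of_true (hO1) hO2
          · have hadj := (chain'_iff_get_c.mp hPalt.1) (P.length - 2) (by omega)
            have := hadj.symm
            rw [get_idx_congr P (by omega : P.length - 2 + 1 = P.length - 1) (by omega) (by omega),
              hPlast] at this
            exact this
        · -- inside reversed P
          rw [hWgetr t (by omega) h1, hWgetr (t+1) (by omega) h2]
          have hs : P.length - 2 - (t + 1 - Q.length) + 1 = P.length - 2 - (t - Q.length) := by
            omega
          have hPe := hPpat (P.length - 2 - (t + 1 - Q.length)) (by omega) (by omega)
          rw [get_idx_congr P hs (by omega) (by omega)] at hPe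
          constructor
          · rw [Sym2.eq_swap, hPe]
            rcases hQev with ⟨k, hk⟩; rcases hPodd with ⟨l, hl⟩
            constructor
            · rintro ⟨r, hr⟩; exact ⟨t/2, by omega⟩
            · rintro ⟨r, hr⟩; exact ⟨(P.length - 2 - (t+1-Q.length))/2, by omega⟩
          · have hadj := (chain'_iff_get_c.mp hPalt.1) (P.length - 2 - (t+1-Q.length)) (by omega)
            rw [get_idx_congr P hs (by omega) (by omega)] at hadj
            exact hadj.symm
    refine no_odd_walk hbip hM W.length W rfl ?_ ?_ ?_ hWne ?_ ?_
    · rcases hQev with ⟨k, hk⟩; rcases hPodd with ⟨l, hl⟩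
      exact ⟨k + l, by omega⟩
    · rw [chain'_iff_get_c]
      intro t ht
      exact (hWedge t (by omega) (by omega)).2
    · intro i h1 h2
      exact (hWedge i h1 h2).1
    · rw [head_eq_get W hWne (by omega), hWgetl 0 (by omega) (by omega), hQ0]
      exact hw
    · rw [getLast_eq_get' W hWne (by omega), hWgetr (W.length - 1) (by omega) (by omega),
        get_idx_congr P (by omega : P.length - 2 - (W.length - 1 - Q.length) = 0) (by omega) hPl0,
        hP0]
      exact hu

end EvenOdd

/-- Let `H` be obtained from the bipartite graph `G` by adding a new
vertex `a` on the applicant side (modelled as a vertex isolated in `G`) together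
with edges from `a` to a set `N` of posts, and let `M` be a maximum matching of
`G`. If some vertex of `N` is even with respect to `M` in `G`, then the maximum
matching size of `H` is that of `G` plus one; otherwise (every vertex of `N` is
odd or unreachable) `M` itself is a maximum matching of `H`. -/
theorem add_vertex_max_matching [Fintype V]
    (G H : SimpleGraph V) (side : V → Bool) (hbip : IsBipartiteWith G side)
    (a : V) (ha : side a = false) (haG : ∀ v, ¬ G.Adj a v)
    (N : Set V) (hNside : ∀ p ∈ N, side p = true)
    (hH : ∀ u v, H.Adj u v ↔ G.Adj u v ∨ (u = a ∧ v ∈ N) ∨ (v = a ∧ u ∈ N))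
    (M : Set (Sym2 V)) (hM : IsMaxMatching G M) :
    ((∃ p ∈ N, EvenVtx G M p) → matchNum H = matchNum G + 1) ∧
    ((∀ p ∈ N, OddVtx G M p ∨ UnreachableVtx G M p) → IsMaxMatching H M) := by
  have haE : ∀ e, e ∈ G.edgeSet → a ∉ e := by
    intro e
    induction e using Sym2.ind with
    | _ x y =>
      intro he hae
      rcases Sym2.mem_iff.mp hae with rfl | rfl
      · exact haG y ((SimpleGraph.mem_edgeSet G).mp he)
      · exact haG x ((SimpleGraph.mem_edgeSet G).mp he).symm
  have hGH : ∀ e, e ∈ G.edgeSet → e ∈ H.edgeSet := by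
    intro e
    induction e using Sym2.ind with
    | _ x y =>
      intro he
      exact (SimpleGraph.mem_edgeSet H).mpr
        ((hH x y).mpr (Or.inl ((SimpleGraph.mem_edgeSet G).mp he)))
  have hHedge : ∀ e, e ∈ H.edgeSet → a ∉ e → e ∈ G.edgeSet := by
    intro e
    induction e using Sym2.ind with
    | _ x y =>
      intro he hae
      rcases (hH x y).mp ((SimpleGraph.mem_edgeSet H).mp he) with h | ⟨rfl, _⟩ | ⟨rfl, _⟩
      · exact (SimpleGraph.mem_edgeSet G).mpr h
      · exact absurd (Sym2.mem_mk_left _ _) hae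
      · exact absurd (Sym2.mem_mk_right _ _) hae
  have hdecomp : ∀ M', IsMatchingIn H M' →
      (IsMatchingIn G M') ∨ ∃ p0, p0 ∈ N ∧ s(a,p0) ∈ M' ∧
        IsMatchingIn G (M' \ {s(a,p0)}) ∧ ¬ IsMatchedBy (M' \ {s(a,p0)}) p0 := by
    intro M' hM'
    by_cases hA : ∃ e ∈ M', a ∈ e
    · obtain ⟨e, heM, hae⟩ := hA
      obtain ⟨p0, hep⟩ : ∃ p0, e = s(a, p0) := by
        revert hae
        induction e using Sym2.ind with
        | _ x y =>
          intro hae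
          rcases Sym2.mem_iff.mp hae with rfl | rfl
          · exact ⟨y, rfl⟩
          · exact ⟨x, Sym2.eq_swap⟩
      subst hep
      have hadj : H.Adj a p0 := (SimpleGraph.mem_edgeSet H).mp (hM'.1 heM)
      have hp0N : p0 ∈ N := by
        rcases (hH a p0).mp hadj with h | ⟨_, h⟩ | ⟨h1, _⟩
        · exact absurd h (haG p0)
        · exact h
        · exact absurd (h1 ▸ hadj) (H.irrefl)
      refine Or.inr ⟨p0, hp0N, heM, ⟨?_, ?_⟩, ?_⟩
      · intro f hf
        have haf : a ∉ f := by
          intro haf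
          exact hM'.2 f hf.1 _ heM hf.2 a haf (Sym2.mem_mk_left _ _)
        exact hHedge f (hM'.1 hf.1) haf
      · intro e1 he1 e2 he2 hne v hv1 hv2
        exact hM'.2 e1 he1.1 e2 he2.1 hne v hv1 hv2
      · rintro ⟨f, hf, hpf⟩
        exact hM'.2 f hf.1 _ heM hf.2 p0 hpf (Sym2.mem_mk_right _ _)
    · push_neg at hA
      refine Or.inl ⟨fun f hf => hHedge f (hM'.1 hf) (hA f hf), hM'.2⟩
  have hbound : ∀ M', IsMatchingIn H M' → M'.ncard ≤ M.ncard + 1 := by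
    intro M' hM'
    rcases hdecomp M' hM' with hG | ⟨q, _, heM, hKmat, _⟩
    · exact le_trans (hM.2 M' hG) (by omega)
    · have h1 : (M' \ {s(a,q)}).ncard + 1 = M'.ncard := Set.ncard_diff_singleton_add_one heM
      have h2 := hM.2 _ hKmat
      omega
  have hub : ∀ n ∈ {n | ∃ K, IsMatchingIn G K ∧ n = K.ncard}, n ≤ M.ncard := by
    rintro n ⟨K, hK, rfl⟩; exact hM.2 K hK
  have hmnG : matchNum G = M.ncard := by
    apply le_antisymm
    · exact csSup_le ⟨M.ncard, M, hM.1, rfl⟩ hub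
    · exact le_csSup ⟨M.ncard, hub⟩ ⟨M, hM.1, rfl⟩
  constructor
  · rintro ⟨q, hqN, hqEven⟩
    obtain ⟨u, P, hu, hPalt, hPeven⟩ := hqEven
    have hPne : P ≠ [] := by rintro rfl; simp [IsAltPath] at hPalt
    have hPl0 : 0 < P.length := List.length_pos_iff.mpr hPne
    have hPpat := alt_pattern hu hPalt
    have hPhead : ¬ IsMatchedBy M (P.head hPne) := by
      have h := hPalt.2.2.2.1
      rw [List.head?_eq_head hPne] at h
      rw [Option.some.inj h]
      exact hu
    have hPoddlen : Odd P.length := by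
      rw [pathEdges_length] at hPeven
      rcases hPeven with ⟨k, hk⟩; exact ⟨k, by omega⟩
    obtain ⟨M2, hM2, hres⟩ := flip_lemma P.length P M rfl hM.1 hPalt.2.1 hPalt.1 hPpat hPne
      hPhead (fun hev => absurd hev (by rcases hPoddlen with ⟨k,hk⟩; rintro ⟨l,hl⟩; omega))
    rcases hres with ⟨_, hcard2, hq2⟩ | ⟨hev, _⟩
    swap
    · exact absurd hev (by rcases hPoddlen with ⟨k,hk⟩; rintro ⟨l,hl⟩; omega)
    have hgl : P.getLast hPne = q := by
      have h := hPalt.2.2.2.2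
      rw [List.getLast?_eq_getLast hPne] at h
      exact Option.some.inj h
    have hqM2 : ¬ IsMatchedBy M2 q := by rw [← hgl]; exact hq2
    have hM2G : M2 ⊆ G.edgeSet := hM2.1
    have hM3 : IsMatchingIn H (insert s(a,q) M2) := by
      constructor
      · intro e he
        rcases he with rfl | he
        · exact (SimpleGraph.mem_edgeSet H).mpr ((hH a q).mpr (Or.inr (Or.inl ⟨rfl, hqN⟩)))
        · exact hGH e (hM2G he)
      · intro e he f hf hnef v hve hvf
        rcases he with rfl | he <;> rcases hf with rfl | hf
        · exact hnef rfl
        · rcases Sym2.mem_iff.mp hve with rfl | rfl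
          · exact haE f (hM2G hf) hvf
          · exact hqM2 ⟨f, hf, hvf⟩
        · rcases Sym2.mem_iff.mp hvf with rfl | rfl
          · exact haE e (hM2G he) hve
          · exact hqM2 ⟨e, he, hve⟩
        · exact hM2.2 e he f hf hnef v hve hvf
    have hM3card : (insert s(a,q) M2).ncard = M.ncard + 1 := by
      rw [Set.ncard_insert_of_notMem (fun hc => haE _ (hM2G hc) (Sym2.mem_mk_left _ _)),
        hcard2]
    have hubH : ∀ n ∈ {n | ∃ K, IsMatchingIn H K ∧ n = K.ncard}, n ≤ M.ncard + 1 := by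
      rintro n ⟨K, hK, rfl⟩; exact hbound K hK
    have hmnH : matchNum H = M.ncard + 1 := by
      apply le_antisymm
      · exact csSup_le ⟨(insert s(a,q) M2).ncard, _, hM3, rfl⟩ hubH
      · have := le_csSup ⟨M.ncard + 1, hubH⟩
          (show (insert s(a,q) M2).ncard ∈ _ from ⟨_, hM3, rfl⟩)
        rw [hM3card] at this
        exact this
    rw [hmnH, hmnG]
  · intro hodd
    refine ⟨⟨fun e he => hGH e (hM.1.1 he), hM.1.2⟩, ?_⟩
    intro M' hM'
    by_contra hlt
    push_neg at hlt
    rcases hdecomp M' hM' with hG | ⟨q, hqN, heM, hKmat, hKq⟩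
    · exact absurd (hM.2 M' hG) (by omega)
    · have h1 : (M' \ {s(a,q)}).ncard + 1 = M'.ncard := Set.ncard_diff_singleton_add_one heM
      have hKle : (M' \ {s(a,q)}).ncard ≤ M.ncard := hM.2 _ hKmat
      have hge : M.ncard ≤ (M' \ {s(a,q)}).ncard := by omega
      have hEv : EvenVtx G M q := even_of_unmatched hM hKmat hge q hKq
      rcases hodd q hqN with hOdd | hUn
      · exact not_even_and_odd hbip hM q hEv hOdd
      · obtain ⟨u, pa, h1, h2, _⟩ := hEv
        exact hUn ⟨u, pa, h1, h2⟩
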